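/- Let C be an n×n real symmetric positive semidefinite matrix and v₀ ∈ ℝⁿ, and set w = Cv₀. Then wᵀ(C + εIₙ)⁻¹w converges to v₀ᵀCv₀ as ε → 0 from the right. -/

import Mathlib

open Matrix Topology Filter

theorem stmt_12 {n : ℕ}
    (C : Matrix (Fin n) (Fin n) ℝ) (hC : C.PosSemidef)
    (v₀ : Fin n → ℝ) (w : Fin n → ℝ) (hw : w = C.mulVec v₀) :
    Tendsto (fun ε : ℝ => w ⬝ᵥ (C + ε • 1)⁻¹.mulVec w)
      (𝓝[>] 0) (𝓝 (v₀ ⬝ᵥ C.mulVec v₀)) := by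
  -- auxiliary facts for each ε > 0
  have key : ∀ ε : ℝ, 0 < ε →
      (w ⬝ᵥ (C + ε • 1)⁻¹.mulVec w
        = v₀ ⬝ᵥ C.mulVec v₀ - ε * (w ⬝ᵥ (C + ε • 1)⁻¹.mulVec v₀))
      ∧ 0 ≤ w ⬝ᵥ (C + ε • 1)⁻¹.mulVec v₀
      ∧ w ⬝ᵥ (C + ε • 1)⁻¹.mulVec v₀ ≤ v₀ ⬝ᵥ v₀ := by
    intro ε hε
    set A : Matrix (Fin n) (Fin n) ℝ := C + ε • 1 with hAdef
    have hA : A.PosDef := by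
      refine Matrix.PosDef.posSemidef_add hC ?_
      rw [smul_one_eq_diagonal]
      exact Matrix.PosDef.diagonal (fun i => hε)
    have hAunit : IsUnit A.det := isUnit_iff_ne_zero.mpr hA.det_pos.ne'
    set y : Fin n → ℝ := A⁻¹.mulVec v₀ with hy
    have h1 : A.mulVec y = v₀ := by
      rw [hy, mulVec_mulVec, Matrix.mul_nonsing_inv A hAunit, one_mulVec]
    have hv₀ : v₀ = C.mulVec y + ε • y := by
      rw [← h1, hAdef, add_mulVec, smul_mulVec, one_mulVec]
    have h2 : A⁻¹.mulVec w = v₀ - ε • y := by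
      have : w = A.mulVec v₀ - ε • v₀ := by
        rw [hw, hAdef, add_mulVec, smul_mulVec, one_mulVec, add_sub_cancel_right]
      rw [this, mulVec_sub, mulVec_smul, mulVec_mulVec, Matrix.nonsing_inv_mul A hAunit,
        one_mulVec, ← hy]
    -- symmetry of C
    have hCsymm : Cᵀ = C := hC.isHermitian.eq
    have hsym : ∀ a b : Fin n → ℝ, C.mulVec a ⬝ᵥ b = a ⬝ᵥ C.mulVec b := by
      intro a b
      rw [dotProduct_mulVec, ← mulVec_transpose, hCsymm]
    have h3 : 0 ≤ y ⬝ᵥ C.mulVec y := hC.dotProduct_mulVec_nonneg y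
    have h4 : 0 ≤ C.mulVec y ⬝ᵥ C.mulVec y := Finset.sum_nonneg fun i _ => mul_self_nonneg _
    have h8 : 0 ≤ y ⬝ᵥ y := Finset.sum_nonneg fun i _ => mul_self_nonneg _
    have h7 : C.mulVec y ⬝ᵥ y = y ⬝ᵥ C.mulVec y := hsym y y
    refine ⟨?_, ?_, ?_⟩
    · rw [h2, dotProduct_sub, dotProduct_smul, hw, hsym, smul_eq_mul, hy]
    · rw [hw, hsym, hv₀]
      simp only [add_dotProduct, dotProduct_add, smul_dotProduct, dotProduct_smul, smul_eq_mul]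
      nlinarith
    · rw [hw, hsym, hv₀]
      simp only [add_dotProduct, dotProduct_add, smul_dotProduct, dotProduct_smul, smul_eq_mul]
      rw [h7]
      nlinarith [mul_nonneg hε.le h3, mul_nonneg (mul_nonneg hε.le hε.le) h8]
  -- squeeze
  have hg : Tendsto (fun ε : ℝ => ε * (w ⬝ᵥ (C + ε • 1)⁻¹.mulVec v₀)) (𝓝[>] 0) (𝓝 0) := by
    have hb : Tendsto (fun ε : ℝ => ε * (v₀ ⬝ᵥ v₀)) (𝓝[>] 0) (𝓝 0) := by
      have := (tendsto_id.mul_const (v₀ ⬝ᵥ v₀) : Tendsto (fun ε : ℝ => ε * (v₀ ⬝ᵥ v₀)) (𝓝 0) (𝓝 (0 * (v₀ ⬝ᵥ v₀))))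
      simpa using this.mono_left nhdsWithin_le_nhds
    refine squeeze_zero' ?_ ?_ hb
    · filter_upwards [self_mem_nhdsWithin] with ε (hε : 0 < ε)
      exact mul_nonneg hε.le (key ε hε).2.1
    · filter_upwards [self_mem_nhdsWithin] with ε (hε : 0 < ε)
      exact mul_le_mul_of_nonneg_left (key ε hε).2.2 hε.le
  have : Tendsto (fun ε : ℝ => v₀ ⬝ᵥ C.mulVec v₀ - ε * (w ⬝ᵥ (C + ε • 1)⁻¹.mulVec v₀))
      (𝓝[>] 0) (𝓝 (v₀ ⬝ᵥ C.mulVec v₀)) := by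
    simpa using (tendsto_const_nhds.sub hg)
  refine this.congr' ?_
  filter_upwards [self_mem_nhdsWithin] with ε (hε : 0 < ε)
  exact ((key ε hε).1).symm
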